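/- Let F : ℝ^d → ℝ be a convex C³ function, fix θ₀, θ₁, and set φ(t) = F(θ₀ + t(θ₁−θ₀)), H₀ = ∇²F(θ₀) ≻ 0. Suppose |φ'''(t)| ≤ S·φ''(t) for all t ∈ [0,1], where S = |⟨W, θ₁−θ₀⟩| for some vector W. Then ((e^{−S} + S − 1)/S²)·‖θ₁−θ₀‖²_{H₀} ≤ F(θ₁) − F(θ₀) − ⟨∇F(θ₀), θ₁−θ₀⟩ ≤ ((e^{S} − S − 1)/S²)·‖θ₁−θ₀‖²_{H₀}. -/

import Mathlib

open Matrix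

lemma gron_aux {p χ : ℝ → ℝ} {S : ℝ}
    (hp : ∀ t, HasDerivAt p (χ t) t)
    (hb : ∀ t ∈ Set.Icc (0:ℝ) 1, |χ t| ≤ S * p t) :
    ∀ t ∈ Set.Icc (0:ℝ) 1,
      p 0 * Real.exp (-S * t) ≤ p t ∧ p t ≤ p 0 * Real.exp (S * t) := by
  have hIoo : interior (Set.Icc (0:ℝ) 1) = Set.Ioo 0 1 := interior_Icc
  have hder1 : ∀ t : ℝ, HasDerivAt (fun t => p t * Real.exp (-S * t))
      ((χ t - S * p t) * Real.exp (-S * t)) t := by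
    intro t
    have he : HasDerivAt (fun t : ℝ => Real.exp (-S * t)) (Real.exp (-S * t) * (-S)) t := by
      simpa using ((hasDerivAt_id t).const_mul (-S)).exp
    have := (hp t).mul he
    refine this.congr_deriv ?_
    ring
  have hanti : AntitoneOn (fun t => p t * Real.exp (-S * t)) (Set.Icc 0 1) := by
    apply antitoneOn_of_deriv_nonpos (convex_Icc 0 1)
    · exact (Differentiable.continuous fun t => (hder1 t).differentiableAt).continuousOn
    · intro x _; exact ((hder1 x).differentiableAt).differentiableWithinAt
    · intro x hx
      rw [(hder1 x).deriv]
      rw [hIoo] at hx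
      have hxm : x ∈ Set.Icc (0:ℝ) 1 := Set.mem_Icc_of_Ioo hx
      have h1 : χ x - S * p x ≤ 0 := by
        have := (abs_le.mp (hb x hxm)).2; linarith
      exact mul_nonpos_of_nonpos_of_nonneg h1 (Real.exp_nonneg _)
  have hder2 : ∀ t : ℝ, HasDerivAt (fun t => p t * Real.exp (S * t))
      ((χ t + S * p t) * Real.exp (S * t)) t := by
    intro t
    have he : HasDerivAt (fun t : ℝ => Real.exp (S * t)) (Real.exp (S * t) * S) t := by
      simpa using ((hasDerivAt_id t).const_mul S).exp
    have := (hp t).mul he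
    refine this.congr_deriv ?_
    ring
  have hmono : MonotoneOn (fun t => p t * Real.exp (S * t)) (Set.Icc 0 1) := by
    apply monotoneOn_of_deriv_nonneg (convex_Icc 0 1)
    · exact (Differentiable.continuous fun t => (hder2 t).differentiableAt).continuousOn
    · intro x _; exact ((hder2 x).differentiableAt).differentiableWithinAt
    · intro x hx
      rw [(hder2 x).deriv]
      rw [hIoo] at hx
      have hxm : x ∈ Set.Icc (0:ℝ) 1 := Set.mem_Icc_of_Ioo hx
      have h1 : 0 ≤ χ x + S * p x := by
        have := (abs_le.mp (hb x hxm)).1; linarith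
      exact mul_nonneg h1 (Real.exp_nonneg _)
  intro t ht
  have h0 : (0:ℝ) ∈ Set.Icc (0:ℝ) 1 := by norm_num
  constructor
  · have := hmono h0 ht ht.1
    simp only [mul_zero, Real.exp_zero, mul_one] at this
    have hpos : (0:ℝ) < Real.exp (S * t) := Real.exp_pos _
    rw [show -S * t = -(S*t) by ring, Real.exp_neg]
    rw [mul_inv_le_iff₀ hpos]
    linarith [this]
  · have := hanti h0 ht ht.1
    simp only [mul_zero, Real.exp_zero, mul_one] at this
    have hpos : (0:ℝ) < Real.exp (-S * t) := Real.exp_pos _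
    have h2 : p t ≤ p 0 / Real.exp (-S * t) := by
      rw [le_div_iff₀ hpos]; linarith
    calc p t ≤ p 0 / Real.exp (-S * t) := h2
      _ = p 0 * Real.exp (S * t) := by
          rw [show -S * t = -(S*t) by ring, Real.exp_neg, div_eq_mul_inv, inv_inv]

lemma int_exp_aux (S : ℝ) :
    ∫ t in (0:ℝ)..1, (1 - t) * Real.exp (S * t)
      = if S = 0 then 1/2 else (Real.exp S - S - 1) / S ^ 2 := by
  by_cases hS : S = 0
  · subst hS
    simp only [zero_mul, Real.exp_zero, mul_one, if_true]
    have hG : ∀ t : ℝ, HasDerivAt (fun t : ℝ => t - t ^ 2 / 2) (1 - t) t := by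
      intro t
      refine ((hasDerivAt_id' t).sub (((hasDerivAt_pow 2 t)).div_const 2)).congr_deriv ?_
      norm_num
    rw [intervalIntegral.integral_eq_sub_of_hasDerivAt (fun t _ => hG t)
      (Continuous.intervalIntegrable (by continuity) _ _)]
    norm_num
  · rw [if_neg hS]
    have hG : ∀ t : ℝ, HasDerivAt (fun t => Real.exp (S * t) * (S * (1 - t) + 1) / S ^ 2)
        ((1 - t) * Real.exp (S * t)) t := by
      intro t
      have he : HasDerivAt (fun t : ℝ => Real.exp (S * t)) (Real.exp (S * t) * S) t := by
        simpa using ((hasDerivAt_id t).const_mul S).exp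
      have hl : HasDerivAt (fun t : ℝ => S * (1 - t) + 1) (-S) t := by
        simpa using (((hasDerivAt_id t).const_sub 1).const_mul S).add_const 1
      have := (he.mul hl).div_const (S ^ 2)
      refine this.congr_deriv ?_
      field_simp
      ring
    rw [intervalIntegral.integral_eq_sub_of_hasDerivAt (fun t _ => hG t)
      (Continuous.intervalIntegrable (by continuity) _ _)]
    field_simp
    simp only [mul_zero, Real.exp_zero]
    ring

/-- Proposition (local), Case (a): Taylor bracketing of a convex C³ function F
along the segment [θ₀, θ₁] under pseudo self-concordance with parameter
S = |⟨W, θ₁−θ₀⟩|. Here the Hessian quadratic form at θ₀ is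
v ↦ (∇²F(θ₀))[v,v] = fderiv ℝ (fun x => fderiv ℝ F x v) θ₀ v. For S = 0 the
bracketing coefficients are interpreted as 1/2. -/
theorem stmt_12 (d : ℕ) (F : (Fin d → ℝ) → ℝ) (θ₀ θ₁ W : Fin d → ℝ)
    (hF : ContDiff ℝ 3 F) (hconv : ConvexOn ℝ Set.univ F)
    (hH₀ : ∀ v : Fin d → ℝ, v ≠ 0 →
      0 < fderiv ℝ (fun x => fderiv ℝ F x v) θ₀ v)
    (S : ℝ) (hSdef : S = |W ⬝ᵥ (θ₁ - θ₀)|)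
    (hsc : ∀ t ∈ Set.Icc (0:ℝ) 1,
      |iteratedDeriv 3 (fun s => F (θ₀ + s • (θ₁ - θ₀))) t| ≤
        S * iteratedDeriv 2 (fun s => F (θ₀ + s • (θ₁ - θ₀))) t) :
    (if S = 0 then (1/2 : ℝ) else (Real.exp (-S) + S - 1) / S ^ 2) *
        fderiv ℝ (fun x => fderiv ℝ F x (θ₁ - θ₀)) θ₀ (θ₁ - θ₀)
      ≤ F θ₁ - F θ₀ - fderiv ℝ F θ₀ (θ₁ - θ₀) ∧
    F θ₁ - F θ₀ - fderiv ℝ F θ₀ (θ₁ - θ₀)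
      ≤ (if S = 0 then (1/2 : ℝ) else (Real.exp S - S - 1) / S ^ 2) *
        fderiv ℝ (fun x => fderiv ℝ F x (θ₁ - θ₀)) θ₀ (θ₁ - θ₀) := by
  set v : Fin d → ℝ := θ₁ - θ₀ with hv
  set g₁ : (Fin d → ℝ) → ℝ := fun x => fderiv ℝ F x v with hg₁def
  set g₂ : (Fin d → ℝ) → ℝ := fun x => fderiv ℝ g₁ x v with hg₂def
  have hg₁ : ContDiff ℝ 2 g₁ := (hF.fderiv_right (by norm_num)).clm_apply contDiff_const
  have hg₂ : ContDiff ℝ 1 g₂ := (hg₁.fderiv_right (by norm_num)).clm_apply contDiff_const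
  have hL : ∀ t : ℝ, HasDerivAt (fun s : ℝ => θ₀ + s • v) v t := by
    intro t
    simpa using ((hasDerivAt_id t).smul_const v).const_add θ₀
  have hLc : Continuous (fun s : ℝ => θ₀ + s • v) := by continuity
  have hφ' : ∀ t : ℝ, HasDerivAt (fun s : ℝ => F (θ₀ + s • v)) (g₁ (θ₀ + t • v)) t := by
    intro t
    exact ((hF.differentiable (by norm_num)) _).hasFDerivAt.comp_hasDerivAt t (hL t)
  have hψ₁ : ∀ t : ℝ, HasDerivAt (fun s : ℝ => g₁ (θ₀ + s • v)) (g₂ (θ₀ + t • v)) t := by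
    intro t
    exact ((hg₁.differentiable (by norm_num)) _).hasFDerivAt.comp_hasDerivAt t (hL t)
  have hψ₂ : ∀ t : ℝ, HasDerivAt (fun s : ℝ => g₂ (θ₀ + s • v))
      (fderiv ℝ g₂ (θ₀ + t • v) v) t := by
    intro t
    exact ((hg₂.differentiable (by norm_num)) _).hasFDerivAt.comp_hasDerivAt t (hL t)
  have e2 : iteratedDeriv 2 (fun s : ℝ => F (θ₀ + s • v)) = fun t => g₂ (θ₀ + t • v) := by
    ext t
    rw [iteratedDeriv_succ, iteratedDeriv_one]
    rw [show deriv (fun s : ℝ => F (θ₀ + s • v)) = fun s => g₁ (θ₀ + s • v) from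
      funext fun s => (hφ' s).deriv]
    exact (hψ₁ t).deriv
  have e3 : iteratedDeriv 3 (fun s : ℝ => F (θ₀ + s • v))
      = fun t => fderiv ℝ g₂ (θ₀ + t • v) v := by
    ext t
    rw [iteratedDeriv_succ, e2]
    exact (hψ₂ t).deriv
  simp only [e2, e3] at hsc
  -- Grönwall bounds on p t = g₂ (θ₀ + t • v)
  have gron := gron_aux hψ₂ hsc
  -- p is continuous
  have hpc : Continuous (fun t : ℝ => g₂ (θ₀ + t • v)) := hg₂.continuous.comp hLc
  -- Taylor with integral remainder
  have hG : ∀ t : ℝ, HasDerivAt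
      (fun t : ℝ => F (θ₀ + t • v) + (1 - t) * g₁ (θ₀ + t • v))
      ((1 - t) * g₂ (θ₀ + t • v)) t := by
    intro t
    have := (hφ' t).add ((((hasDerivAt_id t).const_sub 1)).mul (hψ₁ t))
    refine this.congr_deriv ?_
    simp
  have hθ1 : θ₀ + (1:ℝ) • v = θ₁ := by
    simp [hv]
  have hθ0 : θ₀ + (0:ℝ) • v = θ₀ := by simp
  have key : F θ₁ - F θ₀ - fderiv ℝ F θ₀ v
      = ∫ t in (0:ℝ)..1, (1 - t) * g₂ (θ₀ + t • v) := by
    rw [intervalIntegral.integral_eq_sub_of_hasDerivAt (fun t _ => hG t)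
      (Continuous.intervalIntegrable ((continuous_const.sub continuous_id).mul hpc) _ _)]
    rw [hθ1, hθ0]
    simp only [hg₁def, sub_self, zero_mul, add_zero, sub_zero, one_mul]
    ring
  have hQ : fderiv ℝ g₁ θ₀ v = g₂ (θ₀ + (0:ℝ) • v) := by
    rw [hθ0]
  have hint : IntervalIntegrable (fun t => (1 - t) * g₂ (θ₀ + t • v))
      MeasureTheory.volume 0 1 :=
    Continuous.intervalIntegrable ((continuous_const.sub continuous_id).mul hpc) _ _
  set p0 : ℝ := g₂ (θ₀ + (0:ℝ) • v) with hp0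
  -- upper bound
  have hub : ∫ t in (0:ℝ)..1, (1 - t) * g₂ (θ₀ + t • v)
      ≤ p0 * (if S = 0 then 1/2 else (Real.exp S - S - 1) / S ^ 2) := by
    have h1 : ∫ t in (0:ℝ)..1, (1 - t) * g₂ (θ₀ + t • v)
        ≤ ∫ t in (0:ℝ)..1, p0 * ((1 - t) * Real.exp (S * t)) := by
      apply intervalIntegral.integral_mono_on (by norm_num) hint
      · exact Continuous.intervalIntegrable (continuous_const.mul ((continuous_const.sub continuous_id).mul
          (Real.continuous_exp.comp (continuous_const.mul continuous_id)))) _ _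
      · intro t ht
        have h2 := (gron t ht).2
        have h3 : (0:ℝ) ≤ 1 - t := by linarith [ht.2]
        calc (1 - t) * g₂ (θ₀ + t • v) ≤ (1 - t) * (p0 * Real.exp (S * t)) :=
              mul_le_mul_of_nonneg_left h2 h3
          _ = p0 * ((1 - t) * Real.exp (S * t)) := by ring
    rw [intervalIntegral.integral_const_mul, int_exp_aux] at h1
    exact h1
  -- lower bound
  have hlb : p0 * (if S = 0 then 1/2 else (Real.exp (-S) + S - 1) / S ^ 2)
      ≤ ∫ t in (0:ℝ)..1, (1 - t) * g₂ (θ₀ + t • v) := by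
    have h1 : ∫ t in (0:ℝ)..1, p0 * ((1 - t) * Real.exp (-S * t))
        ≤ ∫ t in (0:ℝ)..1, (1 - t) * g₂ (θ₀ + t • v) := by
      apply intervalIntegral.integral_mono_on (by norm_num)
        (Continuous.intervalIntegrable (continuous_const.mul ((continuous_const.sub continuous_id).mul
          (Real.continuous_exp.comp (continuous_const.mul continuous_id)))) _ _) hint
      intro t ht
      have h2 := (gron t ht).1
      have h3 : (0:ℝ) ≤ 1 - t := by linarith [ht.2]
      calc p0 * ((1 - t) * Real.exp (-S * t)) = (1 - t) * (p0 * Real.exp (-S * t)) := by ring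
        _ ≤ (1 - t) * g₂ (θ₀ + t • v) := mul_le_mul_of_nonneg_left h2 h3
    rw [intervalIntegral.integral_const_mul, int_exp_aux] at h1
    have hiff : (if -S = 0 then (1/2:ℝ) else (Real.exp (-S) - -S - 1) / (-S) ^ 2)
        = (if S = 0 then (1/2:ℝ) else (Real.exp (-S) + S - 1) / S ^ 2) := by
      by_cases hS : S = 0
      · simp [hS]
      · rw [if_neg hS, if_neg (by simpa using hS)]
        rw [neg_sq]
        ring_nf
    rw [hiff] at h1
    exact h1
  rw [key, hQ]
  constructor
  · calc (if S = 0 then (1/2:ℝ) else (Real.exp (-S) + S - 1) / S ^ 2) * p0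
        = p0 * (if S = 0 then (1/2:ℝ) else (Real.exp (-S) + S - 1) / S ^ 2) := by ring
      _ ≤ _ := hlb
  · calc ∫ t in (0:ℝ)..1, (1 - t) * g₂ (θ₀ + t • v)
        ≤ p0 * (if S = 0 then 1/2 else (Real.exp S - S - 1) / S ^ 2) := hub
      _ = (if S = 0 then (1/2:ℝ) else (Real.exp S - S - 1) / S ^ 2) * p0 := by ring
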